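/- Let F and G be holomorphic functions on the upper half-plane ℍ = {τ ∈ ℂ : Im τ > 0} that are invariant under the Möbius action of SL(2, ℤ), i.e. F((aτ+b)/(cτ+d)) = F(τ) for every [[a,b],[c,d]] ∈ SL(2, ℤ) and likewise for G. Suppose there exist complex sequences (a_n)_{n≥1} and (b_n)_{n≥1} such that for every τ ∈ ℍ the series below converge absolutely and F(τ) = e^{−2πiτ} + Σ_{n≥1} a_n·e^{2πinτ}, G(τ) = e^{−2πiτ} + Σ_{n≥1} b_n·e^{2πinτ} (in particular neither expansion has a constant term). Then F = G. (This is the uniqueness of an SL(2, ℤ)-invariant holomorphic function with Fourier expansion q^{−1} + O(q); the unique such function is j(τ) − 744.) -/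

import Mathlib

open Complex UpperHalfPlane Filter
open scoped Manifold Real Modular

private lemma aux_norm_exp (n : ℕ) (z : ℂ) :
    ‖Complex.exp (2 * ↑π * Complex.I * ((n : ℂ) + 1) * z)‖
      = Real.exp (-(2 * π * (n + 1) * z.im)) := by
  rw [Complex.norm_exp]
  congr 1
  have : ((n : ℂ) + 1) = ((n + 1 : ℝ) : ℂ) := by push_cast; ring
  rw [this]
  simp [Complex.mul_re, Complex.mul_im]

/-- **Uniqueness of an `SL(2, ℤ)`-invariant holomorphic function on the upper half-plane
with Fourier expansion `q⁻¹ + O(q)` (no constant term).**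
If `F` and `G` are holomorphic on `ℍ`, invariant under the Möbius action of `SL(2, ℤ)`, and
each admits an absolutely convergent expansion `e^{−2πiτ} + Σ_{n≥1} c_n e^{2πinτ}`, then
`F = G`. (The unique such function is `j(τ) − 744`.) -/
theorem SL2Z_invariant_qexpansion_unique
    (F G : UpperHalfPlane → ℂ)
    (hF : MDifferentiable 𝓘(ℂ) 𝓘(ℂ) F) (hG : MDifferentiable 𝓘(ℂ) 𝓘(ℂ) G)
    (hFinv : ∀ (γ : Matrix.SpecialLinearGroup (Fin 2) ℤ) (τ : UpperHalfPlane),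
      F (γ • τ) = F τ)
    (hGinv : ∀ (γ : Matrix.SpecialLinearGroup (Fin 2) ℤ) (τ : UpperHalfPlane),
      G (γ • τ) = G τ)
    (a b : ℕ → ℂ)
    (haSum : ∀ τ : UpperHalfPlane,
      Summable fun n : ℕ => ‖a (n + 1) * Complex.exp (2 * π * Complex.I * (n + 1) * (τ : ℂ))‖)
    (hbSum : ∀ τ : UpperHalfPlane,
      Summable fun n : ℕ => ‖b (n + 1) * Complex.exp (2 * π * Complex.I * (n + 1) * (τ : ℂ))‖)
    (hFexp : ∀ τ : UpperHalfPlane,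
      F τ = Complex.exp (-(2 * π * Complex.I * (τ : ℂ)))
        + ∑' n : ℕ, a (n + 1) * Complex.exp (2 * π * Complex.I * (n + 1) * (τ : ℂ)))
    (hGexp : ∀ τ : UpperHalfPlane,
      G τ = Complex.exp (-(2 * π * Complex.I * (τ : ℂ)))
        + ∑' n : ℕ, b (n + 1) * Complex.exp (2 * π * Complex.I * (n + 1) * (τ : ℂ))) :
    F = G := by
  set H : UpperHalfPlane → ℂ := fun τ => F τ - G τ with hH
  -- expansion of H
  have hsumA : ∀ τ : UpperHalfPlane,
      Summable fun n : ℕ => a (n + 1) * Complex.exp (2 * π * Complex.I * (n + 1) * (τ : ℂ)) :=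
    fun τ => (haSum τ).of_norm
  have hsumB : ∀ τ : UpperHalfPlane,
      Summable fun n : ℕ => b (n + 1) * Complex.exp (2 * π * Complex.I * (n + 1) * (τ : ℂ)) :=
    fun τ => (hbSum τ).of_norm
  have hHexp : ∀ τ : UpperHalfPlane,
      H τ = ∑' n : ℕ, (a (n + 1) - b (n + 1))
        * Complex.exp (2 * π * Complex.I * (n + 1) * (τ : ℂ)) := by
    intro τ
    have hs := Summable.tsum_sub (hsumA τ) (hsumB τ)
    simp only [hH]
    rw [hFexp τ, hGexp τ, add_sub_add_left_eq_sub, ← hs]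
    exact (tsum_congr fun n => (sub_mul _ _ _)).symm
  -- the constant C
  set c : ℕ → ℝ := fun n => (‖a (n + 1)‖ + ‖b (n + 1)‖) * Real.exp (-(π * (n + 1))) with hc
  have hτ0 : (0 : ℝ) < (Complex.I / 2).im := by simp
  set τ0 : UpperHalfPlane := ⟨Complex.I / 2, hτ0⟩ with hτ0def
  have key : ∀ (n : ℕ) (u : ℂ),
      ‖u * Complex.exp (2 * π * Complex.I * ((n : ℂ) + 1) * (τ0 : ℂ))‖
        = ‖u‖ * Real.exp (-(π * (n + 1))) := by
    intro n u
    rw [norm_mul, aux_norm_exp n (τ0 : ℂ)]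
    have h1 : (τ0 : ℂ).im = 1 / 2 := by simp [hτ0def]
    rw [h1]
    have h2 : -(2 * π * ((n : ℝ) + 1) * (1 / 2)) = -(π * ((n : ℝ) + 1)) := by ring
    rw [h2]
  have hCsum : Summable c := by
    have ha' : Summable fun n : ℕ => ‖a (n + 1)‖ * Real.exp (-(π * (n + 1))) := by
      have := haSum τ0
      simpa only [key] using this
    have hb' : Summable fun n : ℕ => ‖b (n + 1)‖ * Real.exp (-(π * (n + 1))) := by
      have := hbSum τ0
      simpa only [key] using this
    exact (ha'.add hb').congr fun n => (add_mul _ _ _).symm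
  set C : ℝ := ∑' n, c n with hCdef
  have hC0 : 0 ≤ C := tsum_nonneg fun n => by positivity
  -- the fundamental bound for im τ ≥ 1/2
  have hbound : ∀ τ : UpperHalfPlane, 1 / 2 ≤ τ.im →
      ‖H τ‖ ≤ C * Real.exp (-(π * (2 * τ.im - 1))) := by
    intro τ ht
    rw [hHexp τ]
    have hg : HasSum (fun n : ℕ => c n * Real.exp (-(π * (2 * τ.im - 1))))
        (C * Real.exp (-(π * (2 * τ.im - 1)))) := hCsum.hasSum.mul_right _
    refine tsum_of_norm_bounded hg ?_
    intro n
    rw [norm_mul, aux_norm_exp n (τ : ℂ), UpperHalfPlane.coe_im]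
    have h1 : ‖a (n + 1) - b (n + 1)‖ ≤ ‖a (n + 1)‖ + ‖b (n + 1)‖ := norm_sub_le _ _
    have h2 : Real.exp (-(2 * π * ((n : ℝ) + 1) * τ.im))
        ≤ Real.exp (-(π * ((n : ℝ) + 1))) * Real.exp (-(π * (2 * τ.im - 1))) := by
      rw [← Real.exp_add]
      apply Real.exp_le_exp.mpr
      have hn : (0 : ℝ) ≤ π * (n : ℝ) * (2 * τ.im - 1) :=
        mul_nonneg (mul_nonneg Real.pi_pos.le (Nat.cast_nonneg n)) (by linarith)
      nlinarith [hn]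
    show _ ≤ (‖a (n + 1)‖ + ‖b (n + 1)‖) * Real.exp (-(π * (n + 1)))
      * Real.exp (-(π * (2 * τ.im - 1)))
    exact (mul_le_mul h1 h2 (Real.exp_pos _).le (by positivity)).trans_eq
      (mul_assoc _ _ _).symm
  -- im bound on the fundamental domain
  have hfd_im : ∀ σ : UpperHalfPlane, σ ∈ 𝒟 → 1 / 2 ≤ σ.im := by
    intro σ hσ
    have h3 := ModularGroup.three_le_four_mul_im_sq_of_mem_fd hσ
    nlinarith [σ.im_pos]
  -- holomorphy of H on ℂ side
  set Ω : Set ℂ := {z : ℂ | 0 < z.im} with hΩdef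
  have hdiff : DifferentiableOn ℂ (fun z => H (ofComplex z)) Ω := by
    have hFd := UpperHalfPlane.mdifferentiable_iff.mp hF
    have hGd := UpperHalfPlane.mdifferentiable_iff.mp hG
    exact fun z hz => ((hFd z hz).sub (hGd z hz))
  -- main argument
  funext τ₁
  by_contra hne
  have hε : 0 < ‖H τ₁‖ := norm_pos_iff.mpr (sub_ne_zero.mpr hne)
  -- choose T
  have htend : Tendsto (fun t : ℝ => C * Real.exp (-(π * (2 * t - 1)))) atTop (nhds 0) := by
    have h1 : Tendsto (fun t : ℝ => 2 * t - 1) atTop atTop := by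
      apply tendsto_atTop_add_const_right
      exact tendsto_id.const_mul_atTop two_pos
    have h2 : Tendsto (fun t : ℝ => π * (2 * t - 1)) atTop atTop :=
      h1.const_mul_atTop Real.pi_pos
    have h3 : Tendsto (fun t : ℝ => -(π * (2 * t - 1))) atTop atBot :=
      tendsto_neg_atBot_iff.mpr h2
    have h4 := Real.tendsto_exp_atBot.comp h3
    simpa using h4.const_mul C
  obtain ⟨T, hT2, hT1⟩ :
      ∃ T : ℝ, C * Real.exp (-(π * (2 * T - 1))) < ‖H τ₁‖ ∧ 1 ≤ T :=
    ((htend.eventually (gt_mem_nhds hε)).and (eventually_ge_atTop (1 : ℝ))).exists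
  -- the compact box
  set K : Set ℂ := Set.Icc (-(1 / 2) : ℝ) (1 / 2) ×ℂ Set.Icc (1 / 2) T with hKdef
  have hKΩ : K ⊆ Ω := by
    intro z hz
    have := (Complex.mem_reProdIm.mp hz).2.1
    exact lt_of_lt_of_le one_half_pos this
  have hKc : IsCompact K :=
    Metric.isCompact_of_isClosed_isBounded (isClosed_Icc.reProdIm isClosed_Icc)
      ((Metric.isBounded_Icc _ _).reProdIm (Metric.isBounded_Icc _ _))
  have hKne : K.Nonempty := by
    refine ⟨Complex.I, Complex.mem_reProdIm.mpr ⟨?_, ?_⟩⟩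
    · simp
    · simp only [Complex.I_im, Set.mem_Icc]
      exact ⟨by norm_num, hT1⟩
  obtain ⟨ζ, hζK, hζmax⟩ :=
    hKc.exists_isMaxOn hKne ((hdiff.continuousOn.mono hKΩ).norm)
  -- membership in K from the fundamental domain
  have hmem : ∀ σ : UpperHalfPlane, σ ∈ 𝒟 → σ.im ≤ T → (σ : ℂ) ∈ K := by
    intro σ hσ hle
    refine Complex.mem_reProdIm.mpr ⟨?_, ?_⟩
    · have := hσ.2
      rw [abs_le] at this
      simpa [UpperHalfPlane.coe_re] using this
    · exact ⟨by simpa [UpperHalfPlane.coe_im] using hfd_im σ hσ,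
        by simpa [UpperHalfPlane.coe_im] using hle⟩
  -- dichotomy for any τ
  have key2 : ∀ τ : UpperHalfPlane,
      ‖H τ‖ ≤ ‖H (ofComplex ζ)‖ ∨ ‖H τ‖ ≤ C * Real.exp (-(π * (2 * T - 1))) := by
    intro τ
    obtain ⟨γ, hγ⟩ := ModularGroup.exists_smul_mem_fd τ
    have hinv : H τ = H (γ • τ) := by simp only [hH, hFinv, hGinv]
    rcases le_or_gt (γ • τ).im T with h | h
    · left
      rw [hinv]
      have hmK : ((γ • τ : UpperHalfPlane) : ℂ) ∈ K := hmem _ hγ h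
      have h5 := hζmax hmK
      rw [← ofComplex_apply (γ • τ)]
      exact h5
    · right
      rw [hinv]
      refine (hbound _ (by linarith [hfd_im _ hγ])).trans ?_
      refine mul_le_mul_of_nonneg_left ?_ hC0
      apply Real.exp_le_exp.mpr
      nlinarith [Real.pi_pos]
  have hεm : ‖H τ₁‖ ≤ ‖H (ofComplex ζ)‖ := by
    rcases key2 τ₁ with h | h
    · exact h
    · exact absurd (h.trans_lt hT2) (lt_irrefl _)
  -- global max
  have hglobal : IsMaxOn (norm ∘ fun z => H (ofComplex z)) Ω ζ := by
    intro z hz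
    simp only [Set.mem_setOf_eq, Function.comp_apply]
    have hz' : 0 < z.im := hz
    rcases key2 ⟨z, hz'⟩ with h | h
    · rw [ofComplex_apply_of_im_pos hz']
      exact h
    · rw [ofComplex_apply_of_im_pos hz']
      exact h.trans (hT2.le.trans hεm)
  -- maximum modulus principle
  have hΩopen : IsOpen Ω := isOpen_lt continuous_const Complex.continuous_im
  have hΩpre : IsPreconnected Ω := (convex_halfSpace_im_gt 0).isPreconnected
  have heq := Complex.eqOn_of_isPreconnected_of_isMaxOn_norm hΩpre hΩopen hdiff
    (hKΩ hζK) hglobal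
  -- contradiction at a point high up
  have himT : 0 < (Complex.I * ((T : ℂ) + 1)).im := by
    simp only [Complex.mul_im, Complex.I_re, Complex.I_im]
    simp
    linarith
  set τT : UpperHalfPlane := ⟨Complex.I * ((T : ℂ) + 1), himT⟩ with hτT
  have hτTim : τT.im = T + 1 := by
    simp [hτT, UpperHalfPlane.im, Complex.mul_im]
  have h1 : H (ofComplex (Complex.I * ((T : ℂ) + 1))) = H (ofComplex ζ) := heq himT
  have h2 : ‖H (ofComplex ζ)‖ ≤ C * Real.exp (-(π * (2 * (T + 1) - 1))) := by
    rw [← h1]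
    have := hbound τT (by rw [hτTim]; linarith)
    rw [hτTim] at this
    simpa [hτT, ofComplex_apply_of_im_pos himT] using this
  have h3 : C * Real.exp (-(π * (2 * (T + 1) - 1)))
      ≤ C * Real.exp (-(π * (2 * T - 1))) := by
    refine mul_le_mul_of_nonneg_left ?_ hC0
    apply Real.exp_le_exp.mpr
    nlinarith [Real.pi_pos]
  have : ‖H τ₁‖ < ‖H τ₁‖ := lt_of_le_of_lt (hεm.trans (h2.trans h3)) hT2
  exact absurd this (lt_irrefl _)
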